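/- Let n ≥ 2. The set RSP_n of restricted signed partitions of [±n] is a submonoid of SP_n, it is generated as a monoid by E_n^× := {ε_{i,j} : i, j ∈ [±n], i < j, j ≠ −i}, and the cardinality of E_n^× is n² − n. -/

import Mathlib

instance setoidCommMonoid (α : Type*) : CommMonoid (Setoid α) where
  mul := (· ⊔ ·)
  one := ⊥
  mul_assoc := sup_assoc
  one_mul := bot_sup_eq
  mul_one := sup_bot_eq
  mul_comm := sup_comm

def muSet {α : Type*} (X : Set α) : Setoid α :=
  Relation.EqvGen.setoid (fun x y => x ∈ X ∧ y ∈ X)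

def mu {α : Type*} (i j : α) : Setoid α := muSet {i, j}

/-- `[±n]`: nonzero integers of absolute value at most `n`, with the order from `ℤ`. -/
abbrev PM (n : ℕ) := {k : ℤ // k ≠ 0 ∧ |k| ≤ (n : ℤ)}

namespace PM

/-- The negation involution `k ↦ -k` on `[±n]`. -/
def neg {n : ℕ} (x : PM n) : PM n :=
  ⟨-x.1, by obtain ⟨h1, h2⟩ := x.2; exact ⟨neg_ne_zero.mpr h1, by rwa [abs_neg]⟩⟩

@[simp] theorem neg_neg {n : ℕ} (x : PM n) : x.neg.neg = x := Subtype.ext (by simp [neg])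

theorem neg_lt_neg {n : ℕ} {x y : PM n} (h : x < y) : y.neg < x.neg := by
  have h' : x.1 < y.1 := Subtype.coe_lt_coe.mpr h
  rw [← Subtype.coe_lt_coe]
  show -y.1 < -x.1
  omega

theorem neg_lt_pos {n : ℕ} {x y : PM n} (hx : 0 < x.1) (hy : 0 < y.1) : x.neg < y := by
  rw [← Subtype.coe_lt_coe]
  show -x.1 < y.1
  omega

theorem pos_ne_neg {n : ℕ} {x y : PM n} (hx : 0 < x.1) (hy : 0 < y.1) : y ≠ x.neg := by
  intro h
  have : y.1 = -x.1 := congrArg Subtype.val h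
  omega

theorem neg_lt_self {n : ℕ} {x : PM n} (hx : 0 < x.1) : x.neg < x := neg_lt_pos hx hx

/-- The absolute value map `x ↦ |x|` from `[±n]` to its positive part. -/
def abs {n : ℕ} (x : PM n) : PM n :=
  ⟨|x.1|, by obtain ⟨h1, h2⟩ := x.2; exact ⟨abs_ne_zero.mpr h1, by rwa [abs_abs]⟩⟩

end PM

/-- Image of a subset of `[±n]` under negation. -/
def negSet {n : ℕ} (K : Set (PM n)) : Set (PM n) := PM.neg '' K

/-- The partition `I⁻` transported along negation: `x ∼ y` in `negPart I` iff `-x ∼ -y` in `I`. -/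
def negPart {n : ℕ} (I : Setoid (PM n)) : Setoid (PM n) := Setoid.comap PM.neg I

/-- A set partition `I` of `[±n]` is *signed* if for every block `K` of `I` the set `-K` is
also a block; equivalently, `x ∼ y ↔ -x ∼ -y` for all `x, y`. -/
def IsSigned {n : ℕ} (I : Setoid (PM n)) : Prop :=
  ∀ x y : PM n, I x y ↔ I (PM.neg x) (PM.neg y)

/-- A *zero block* of a partition `I` is a block `K` with `-K = K`. -/
def IsZeroBlock {n : ℕ} (I : Setoid (PM n)) (K : Set (PM n)) : Prop :=
  K ∈ I.classes ∧ negSet K = K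

/-- A `Bₙ`-partition: a signed partition of `[±n]` with at most one zero block. -/
def IsBPart {n : ℕ} (I : Setoid (PM n)) : Prop :=
  IsSigned I ∧ Set.Subsingleton {K | IsZeroBlock I K}

/-- A *restricted* signed partition: all its zero blocks have more than two elements. -/
def IsRestricted {n : ℕ} (I : Setoid (PM n)) : Prop :=
  IsSigned I ∧ ∀ K : Set (PM n), IsZeroBlock I K → 2 < K.ncard

/-- A `Dₙ`-partition: a `Bₙ`-partition whose zero block (if present) has more than two
elements. -/
def IsDPart {n : ℕ} (I : Setoid (PM n)) : Prop :=
  IsBPart I ∧ ∀ K : Set (PM n), IsZeroBlock I K → 2 < K.ncard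

/-- For `i < j` in `[±n]`, the signed partition `ε_{i,j} = μ_{-j,-i} ⊔ μ_{i,j}`. -/
def eps {n : ℕ} (i j : PM n) : Setoid (PM n) := mu (PM.neg j) (PM.neg i) ⊔ mu i j

/-- The generating set `Eₙ^× = {ε_{i,j} : i, j ∈ [±n], i < j, j ≠ -i}`. -/
def Enx (n : ℕ) : Set (Setoid (PM n)) :=
  {x | ∃ i j : PM n, i < j ∧ j ≠ PM.neg i ∧ x = eps i j}

section Aux

variable {n : ℕ}

instance PM.finite (n : ℕ) : Finite (PM n) :=
  Set.Finite.to_subtype <| (Set.finite_Icc (-(n:ℤ)) n).subset fun k hk => by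
    obtain ⟨h1, h2⟩ := hk
    simp only [Set.mem_Icc]
    constructor <;> [skip; skip] <;> rw [abs_le] at h2 <;> omega

theorem PM.neg_injective {n : ℕ} : Function.Injective (PM.neg (n := n)) := by
  intro x y h
  have := congrArg PM.neg h
  rwa [PM.neg_neg, PM.neg_neg] at this

theorem PM.ne_neg_self {n : ℕ} (x : PM n) : x ≠ x.neg := by
  intro h
  have : x.1 = -x.1 := congrArg Subtype.val h
  have := x.2.1
  omega

/-- `mu a b` relates any two elements of `{a, b}`. -/
theorem mu_rel_of_mem {α : Type*} {a b x y : α} (hx : x ∈ ({a, b} : Set α))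
    (hy : y ∈ ({a, b} : Set α)) : mu a b x y :=
  Relation.EqvGen.rel _ _ ⟨hx, hy⟩

theorem mu_le {α : Type*} {a b : α} {I : Setoid α} (h : I a b) : mu a b ≤ I := by
  apply Setoid.eqvGen_le
  rintro x y ⟨hx, hy⟩
  rcases hx with rfl | rfl <;> rcases hy with rfl | rfl
  · exact I.refl _
  · exact h
  · exact I.symm h
  · exact I.refl _

theorem eps_rel_left {n : ℕ} (i j : PM n) : eps i j i j :=
  le_sup_right (α := Setoid (PM n)) (mu_rel_of_mem (by simp) (by simp))

theorem eps_rel_right {n : ℕ} (i j : PM n) : eps i j j.neg i.neg :=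
  le_sup_left (α := Setoid (PM n)) (mu_rel_of_mem (by simp) (by simp))

theorem eps_le {n : ℕ} {i j : PM n} {I : Setoid (PM n)} (h1 : I i j)
    (h2 : I j.neg i.neg) : eps i j ≤ I :=
  sup_le (mu_le h2) (mu_le h1)

theorem eps_symm_eq {n : ℕ} (i j : PM n) : eps j.neg i.neg = eps i j := by
  unfold eps
  rw [PM.neg_neg, PM.neg_neg, sup_comm]

/-- Characterization of the relation `eps i j` when `j ≠ -i` and `i ≠ j`. -/
theorem eps_rel_iff {n : ℕ} {i j : PM n} (hij : i ≠ j) (hne : j ≠ i.neg) (x y : PM n) :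
    eps i j x y ↔ x = y ∨ (x ∈ ({i, j} : Set (PM n)) ∧ y ∈ ({i, j} : Set (PM n))) ∨
      (x ∈ ({j.neg, i.neg} : Set (PM n)) ∧ y ∈ ({j.neg, i.neg} : Set (PM n))) := by
  have hdisj : ∀ z : PM n, z ∈ ({i, j} : Set (PM n)) →
      z ∈ ({j.neg, i.neg} : Set (PM n)) → False := by
    rintro z (rfl | rfl) (h | h)
    · exact hne (by rw [h, PM.neg_neg])
    · exact PM.ne_neg_self z h
    · exact PM.ne_neg_self z h
    · exact hne (h.symm ▸ rfl)
  constructor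
  · -- build the target setoid and use minimality
    let E : Setoid (PM n) :=
      ⟨fun x y => x = y ∨ (x ∈ ({i, j} : Set (PM n)) ∧ y ∈ ({i, j} : Set (PM n))) ∨
        (x ∈ ({j.neg, i.neg} : Set (PM n)) ∧ y ∈ ({j.neg, i.neg} : Set (PM n))), by
        refine ⟨fun x => Or.inl rfl, ?_, ?_⟩
        · rintro x y (rfl | ⟨h1, h2⟩ | ⟨h1, h2⟩)
          · exact Or.inl rfl
          · exact Or.inr (Or.inl ⟨h2, h1⟩)
          · exact Or.inr (Or.inr ⟨h2, h1⟩)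
        · rintro x y z (rfl | ⟨h1, h2⟩ | ⟨h1, h2⟩) hyz
          · exact hyz
          · rcases hyz with rfl | ⟨h3, h4⟩ | ⟨h3, h4⟩
            · exact Or.inr (Or.inl ⟨h1, h2⟩)
            · exact Or.inr (Or.inl ⟨h1, h4⟩)
            · exact absurd (hdisj _ h2 h3) (by simp)
          · rcases hyz with rfl | ⟨h3, h4⟩ | ⟨h3, h4⟩
            · exact Or.inr (Or.inr ⟨h1, h2⟩)
            · exact absurd (hdisj _ h3 h2) (by simp)
            · exact Or.inr (Or.inr ⟨h1, h4⟩)⟩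
    intro h
    have hle : eps i j ≤ E := by
      apply sup_le
      · apply Setoid.eqvGen_le
        rintro a b ⟨ha, hb⟩
        exact Or.inr (Or.inr ⟨ha, hb⟩)
      · apply Setoid.eqvGen_le
        rintro a b ⟨ha, hb⟩
        exact Or.inr (Or.inl ⟨ha, hb⟩)
    exact hle h
  · rintro (rfl | ⟨h1, h2⟩ | ⟨h1, h2⟩)
    · exact (eps i j).refl _
    · exact le_sup_right (α := Setoid (PM n)) (mu_rel_of_mem h1 h2)
    · exact le_sup_left (α := Setoid (PM n)) (mu_rel_of_mem h1 h2)

end Aux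

section Aux2

variable {n : ℕ}

theorem negPart_rel {n : ℕ} (I : Setoid (PM n)) (x y : PM n) :
    negPart I x y ↔ I x.neg y.neg := Iff.rfl

theorem negPart_negPart {n : ℕ} (I : Setoid (PM n)) : negPart (negPart I) = I := by
  apply Setoid.ext
  intro x y
  show I x.neg.neg y.neg.neg ↔ I x y
  rw [PM.neg_neg, PM.neg_neg]

theorem negPart_mono {n : ℕ} {I J : Setoid (PM n)} (h : I ≤ J) :
    negPart I ≤ negPart J := fun _ _ hxy => h hxy

theorem negPart_sup {n : ℕ} (I J : Setoid (PM n)) :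
    negPart (I ⊔ J) = negPart I ⊔ negPart J := by
  apply le_antisymm
  · have h1 : I ⊔ J ≤ negPart (negPart I ⊔ negPart J) := by
      apply sup_le
      · have := negPart_mono (le_sup_left (a := negPart I) (b := negPart J))
        rwa [negPart_negPart] at this
      · have := negPart_mono (le_sup_right (a := negPart I) (b := negPart J))
        rwa [negPart_negPart] at this
    have := negPart_mono h1
    rwa [negPart_negPart] at this
  · exact sup_le (negPart_mono le_sup_left) (negPart_mono le_sup_right)

theorem isSigned_iff {n : ℕ} {I : Setoid (PM n)} : IsSigned I ↔ negPart I = I := by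
  constructor
  · intro h
    apply Setoid.ext
    intro x y
    exact (h x y).symm
  · intro h x y
    conv_lhs => rw [← h]
    exact Iff.rfl

theorem isSigned_sup {n : ℕ} {I J : Setoid (PM n)} (hI : IsSigned I) (hJ : IsSigned J) :
    IsSigned (I ⊔ J) := by
  rw [isSigned_iff] at *
  rw [negPart_sup, hI, hJ]

theorem mem_negSet {n : ℕ} {K : Set (PM n)} {x : PM n} : x ∈ negSet K ↔ x.neg ∈ K := by
  constructor
  · rintro ⟨y, hy, rfl⟩
    rwa [PM.neg_neg]
  · intro h
    exact ⟨x.neg, h, PM.neg_neg x⟩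

/-- the class of `x` is a zero block whenever `I` is signed and `I x (-x)`. -/
theorem class_zero_block {n : ℕ} {I : Setoid (PM n)} (hs : IsSigned I) {x : PM n}
    (h : I x x.neg) : IsZeroBlock I {y | I y x} := by
  refine ⟨⟨x, rfl⟩, ?_⟩
  ext z
  rw [mem_negSet]
  show I z.neg x ↔ I z x
  constructor
  · intro hz
    have : I z x.neg := by
      have := (hs z x.neg).mpr (by rwa [PM.neg_neg])
      exact this
    exact I.trans this (I.symm h)
  · intro hz
    have : I z.neg x.neg := (hs z x).mp hz
    exact I.trans this (I.symm h)

/-- Chain decomposition for the join. -/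
theorem sup_rel_chain {n : ℕ} (I J : Setoid (PM n)) (x y : PM n) (h : (I ⊔ J) x y) :
    x = y ∨ ∃ z w : PM n, z ≠ w ∧ (I ⊔ J) x z ∧ (I z w ∨ J z w) := by
  have h' : Relation.EqvGen (fun a b => I a b ∨ J a b) x y := by
    rw [Setoid.sup_eq_eqvGen] at h; exact h
  clear h
  induction h' with
  | rel a b hab =>
    by_cases hab' : a = b
    · exact Or.inl hab'
    · exact Or.inr ⟨a, b, hab', (I ⊔ J).refl a, hab⟩
  | refl a => exact Or.inl rfl
  | symm a b hab ih =>
    have hba : (I ⊔ J) b a := by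
      apply (I ⊔ J).symm
      rw [Setoid.sup_eq_eqvGen]
      exact hab
    rcases ih with rfl | ⟨z, w, hzw, hrel, hor⟩
    · exact Or.inl rfl
    · exact Or.inr ⟨z, w, hzw, (I ⊔ J).trans hba hrel, hor⟩
  | trans a b c hab hbc ihab ihbc =>
    rcases ihab with rfl | ⟨z, w, hzw, hrel, hor⟩
    · exact ihbc
    · exact Or.inr ⟨z, w, hzw, hrel, hor⟩

theorem isRestricted_sup {n : ℕ} {I J : Setoid (PM n)} (hI : IsRestricted I)
    (hJ : IsRestricted J) : IsRestricted (I ⊔ J) := by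
  refine ⟨isSigned_sup hI.1 hJ.1, ?_⟩
  rintro K ⟨⟨x₀, rfl⟩, hK⟩
  by_contra hcard
  push_neg at hcard
  set K : Set (PM n) := {y | (I ⊔ J) y x₀} with hKdef
  have hx₀ : x₀ ∈ K := (I ⊔ J).refl x₀
  have hnx₀ : x₀.neg ∈ K := by rw [← hK]; exact mem_negSet.mpr (by rwa [PM.neg_neg])
  have hpair : ({x₀, x₀.neg} : Set (PM n)) ⊆ K := by
    rintro z (rfl | rfl) <;> assumption
  have hpair2 : ({x₀, x₀.neg} : Set (PM n)).ncard = 2 :=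
    Set.ncard_pair (PM.ne_neg_self x₀)
  have hKfin : K.Finite := Set.toFinite K
  have hKeq : K = {x₀, x₀.neg} := by
    apply (Set.eq_of_subset_of_ncard_le hpair (by omega) hKfin).symm
  -- x₀ related to -x₀ in the join
  have hnx₀' : (I ⊔ J) x₀.neg x₀ := hnx₀
  have hrel : (I ⊔ J) x₀ x₀.neg := (I ⊔ J).symm hnx₀' 
  rcases sup_rel_chain I J x₀ x₀.neg hrel with heq | ⟨z, w, hzw, hxz, hor⟩
  · exact PM.ne_neg_self x₀ heq
  · have hzK : z ∈ K := (I ⊔ J).symm hxz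
    have hzw' : (I ⊔ J) z w := by
      rcases hor with h | h
      · exact le_sup_left (a := I) (b := J) h
      · exact le_sup_right (a := I) (b := J) h
    have hwK : w ∈ K := (I ⊔ J).trans ((I ⊔ J).symm hzw') hzK
    -- now z, w ∈ {x₀, -x₀}, distinct
    rw [hKeq] at hzK hwK
    have key : ∀ T : Setoid (PM n), IsRestricted T → T ≤ I ⊔ J → T z w → False := by
      intro T hT hTle hTzw
      have hTx : T x₀ x₀.neg := by
        rcases hzK with rfl | rfl
        · rcases hwK with rfl | rfl
          · exact absurd rfl hzw
          · exact hTzw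
        · rcases hwK with rfl | rfl
          · exact T.symm hTzw
          · exact absurd rfl hzw
      have hzb := class_zero_block hT.1 hTx
      have hlt := hT.2 _ hzb
      have hsub : {y | T y x₀} ⊆ K := fun y hy => hTle hy
      have : ({y | T y x₀} : Set (PM n)).ncard ≤ K.ncard :=
        Set.ncard_le_ncard hsub hKfin
      omega
    rcases hor with h | h
    · exact key I hI le_sup_left h
    · exact key J hJ le_sup_right h

end Aux2

section Aux3

variable {n : ℕ}

theorem pm_pair_disj {n : ℕ} {i j : PM n} (hne : j ≠ i.neg) {z : PM n}
    (h1 : z ∈ ({i, j} : Set (PM n))) (h2 : z ∈ ({j.neg, i.neg} : Set (PM n))) : False := by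
  rcases h1 with rfl | rfl <;> rcases h2 with h | h
  · exact hne (by rw [h, PM.neg_neg])
  · exact PM.ne_neg_self z h
  · exact PM.ne_neg_self z h
  · exact hne (h.symm ▸ rfl)

theorem bot_rel_iff {n : ℕ} (x y : PM n) : (⊥ : Setoid (PM n)) x y ↔ x = y := by
  rw [Setoid.bot_def]

theorem isRestricted_bot : IsRestricted (⊥ : Setoid (PM n)) := by
  constructor
  · intro x y
    rw [bot_rel_iff, bot_rel_iff]
    exact ⟨fun h => by rw [h], fun h => PM.neg_injective h⟩
  · rintro K ⟨⟨x₀, rfl⟩, hK⟩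
    exfalso
    have hKeq : {y | (⊥ : Setoid (PM n)) y x₀} = {x₀} := by
      ext y
      rw [Set.mem_singleton_iff]
      exact bot_rel_iff y x₀
    rw [hKeq] at hK
    have : x₀.neg ∈ ({x₀} : Set (PM n)) := by
      rw [← hK]; exact mem_negSet.mpr (by rw [PM.neg_neg]; rfl)
    exact PM.ne_neg_self x₀ (this.symm)

theorem negSet_pair {n : ℕ} (a b : PM n) : negSet ({a, b} : Set (PM n)) = {a.neg, b.neg} := by
  unfold negSet
  rw [Set.image_pair]

theorem isRestricted_eps {n : ℕ} {i j : PM n} (hij : i ≠ j) (hne : j ≠ i.neg) :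
    IsRestricted (eps i j) := by
  have hA : ∀ x : PM n, x ∈ ({i, j} : Set (PM n)) ↔ x.neg ∈ ({j.neg, i.neg} : Set (PM n)) := by
    intro x
    constructor
    · rintro (rfl | rfl)
      · exact Or.inr rfl
      · exact Or.inl rfl
    · rintro (h | h)
      · exact Or.inr (PM.neg_injective h)
      · exact Or.inl (PM.neg_injective h)
  have hB : ∀ x : PM n, x ∈ ({j.neg, i.neg} : Set (PM n)) ↔ x.neg ∈ ({i, j} : Set (PM n)) := by
    intro x
    constructor
    · rintro (rfl | rfl)
      · rw [PM.neg_neg]; exact Or.inr rfl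
      · rw [PM.neg_neg]; exact Or.inl rfl
    · rintro (h | h)
      · have := congrArg PM.neg h
        rw [PM.neg_neg] at this
        exact Or.inr this
      · have := congrArg PM.neg h
        rw [PM.neg_neg] at this
        exact Or.inl this
  constructor
  · intro x y
    rw [eps_rel_iff hij hne, eps_rel_iff hij hne]
    constructor
    · rintro (rfl | ⟨h1, h2⟩ | ⟨h1, h2⟩)
      · exact Or.inl rfl
      · exact Or.inr (Or.inr ⟨(hA x).mp h1, (hA y).mp h2⟩)
      · exact Or.inr (Or.inl ⟨(hB x).mp h1, (hB y).mp h2⟩)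
    · rintro (h | ⟨h1, h2⟩ | ⟨h1, h2⟩)
      · exact Or.inl (PM.neg_injective h)
      · exact Or.inr (Or.inr ⟨(hB x).mpr h1, (hB y).mpr h2⟩)
      · exact Or.inr (Or.inl ⟨(hA x).mpr h1, (hA y).mpr h2⟩)
  · rintro K ⟨⟨x₀, rfl⟩, hK⟩
    exfalso
    by_cases h1 : x₀ ∈ ({i, j} : Set (PM n))
    · have hKeq : {y | eps i j y x₀} = {i, j} := by
        ext y
        simp only [Set.mem_setOf_eq]
        rw [eps_rel_iff hij hne]
        constructor
        · rintro (rfl | ⟨hy, _⟩ | ⟨hy, hx⟩)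
          · exact h1
          · exact hy
          · exact absurd (pm_pair_disj hne h1 hx) not_false
        · intro hy
          exact Or.inr (Or.inl ⟨hy, h1⟩)
      rw [hKeq, negSet_pair] at hK
      have : i ∈ ({j.neg, i.neg} : Set (PM n)) := by
        rw [Set.pair_comm i.neg j.neg] at hK
        rw [hK]; exact Or.inl rfl
      exact pm_pair_disj hne (Or.inl rfl) this
    · by_cases h2 : x₀ ∈ ({j.neg, i.neg} : Set (PM n))
      · have hKeq : {y | eps i j y x₀} = {j.neg, i.neg} := by
          ext y
          simp only [Set.mem_setOf_eq]
          rw [eps_rel_iff hij hne]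
          constructor
          · rintro (rfl | ⟨hy, hx⟩ | ⟨hy, _⟩)
            · exact h2
            · exact absurd (pm_pair_disj hne hx h2) not_false
            · exact hy
          · intro hy
            exact Or.inr (Or.inr ⟨hy, h2⟩)
        rw [hKeq, negSet_pair, PM.neg_neg, PM.neg_neg] at hK
        have : j ∈ ({j.neg, i.neg} : Set (PM n)) := by
          rw [← hK]; exact Or.inl rfl
        exact pm_pair_disj hne (Or.inr rfl) this
      · have hKeq : {y | eps i j y x₀} = {x₀} := by
          ext y
          simp only [Set.mem_setOf_eq, Set.mem_singleton_iff]
          rw [eps_rel_iff hij hne]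
          constructor
          · rintro (rfl | ⟨_, hx⟩ | ⟨_, hx⟩)
            · rfl
            · exact absurd hx h1
            · exact absurd hx h2
          · rintro rfl
            exact Or.inl rfl
        rw [hKeq] at hK
        have : x₀.neg ∈ ({x₀} : Set (PM n)) := by
          rw [← hK]; exact mem_negSet.mpr (by rw [PM.neg_neg]; rfl)
        exact PM.ne_neg_self x₀ this.symm

end Aux3

section Aux4

variable {n : ℕ}

instance : Finite (Setoid (PM n)) :=
  Finite.of_injective (fun r : Setoid (PM n) => r.r)
    (fun a b hh => Setoid.ext fun x y => iff_of_eq (congrFun (congrFun hh x) y))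

theorem sup_mem_closure {S : Set (Setoid (PM n))} (F : Finset (Setoid (PM n)))
    (h : ∀ e ∈ F, e ∈ Submonoid.closure S) : F.sup id ∈ Submonoid.closure S := by
  classical
  induction F using Finset.induction_on with
  | empty =>
    rw [Finset.sup_empty]
    exact one_mem _
  | insert _ _ ha ih =>
    rw [Finset.sup_insert]
    exact mul_mem (h _ (Finset.mem_insert_self _ _))
      (ih fun e he => h e (Finset.mem_insert_of_mem he))

theorem mem_closure_of_isRestricted {I : Setoid (PM n)} (h : IsRestricted I) :
    I ∈ Submonoid.closure (Enx n) := by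
  classical
  set S : Set (Setoid (PM n)) := {e | e ∈ Enx n ∧ e ≤ I} with hS
  have hfin : S.Finite := Set.toFinite S
  set F : Finset (Setoid (PM n)) := hfin.toFinset with hF
  have helper : ∀ x y : PM n, I x y → x ≠ y → y ≠ x.neg → (F.sup id) x y := by
    intro x y hxy hne hnneg
    rcases lt_or_gt_of_ne hne with hlt | hgt
    · have hmem : eps x y ∈ F := by
        rw [hF, hfin.mem_toFinset]
        exact ⟨⟨x, y, hlt, hnneg, rfl⟩, eps_le hxy (I.symm ((h.1 x y).mp hxy))⟩
      have hle : eps x y ≤ F.sup id := by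
        have := Finset.le_sup (f := (id : Setoid (PM n) → Setoid (PM n))) hmem
        simpa using this
      exact hle (eps_rel_left x y)
    · have hnneg' : x ≠ y.neg := by
        intro hx
        apply hnneg
        rw [hx, PM.neg_neg]
      have hmem : eps y x ∈ F := by
        rw [hF, hfin.mem_toFinset]
        exact ⟨⟨y, x, hgt, hnneg', rfl⟩,
          eps_le (I.symm hxy) (I.symm ((h.1 y x).mp (I.symm hxy)))⟩
      have hle : eps y x ≤ F.sup id := by
        have := Finset.le_sup (f := (id : Setoid (PM n) → Setoid (PM n))) hmem
        simpa using this
      exact (F.sup id).symm (hle (eps_rel_left y x))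
  have hclaim : I = F.sup id := by
    apply le_antisymm
    · intro x y hxy
      by_cases hne : x = y
      · subst hne; exact (F.sup id).refl x
      · by_cases hnn : y = x.neg
        · subst hnn
          -- zero block: class of x has more than 2 elements
          have hzb := class_zero_block h.1 hxy
          have hcard := h.2 _ hzb
          have hnsub : ¬ ({z | I z x} ⊆ ({x, x.neg} : Set (PM n))) := by
            intro hsub
            have h2 := Set.ncard_le_ncard hsub (Set.toFinite _)
            rw [Set.ncard_pair (PM.ne_neg_self x)] at h2
            omega
          obtain ⟨z, hz, hznot⟩ := Set.not_subset.mp hnsub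
          simp only [Set.mem_insert_iff, Set.mem_singleton_iff, not_or] at hznot
          obtain ⟨hz1, hz2⟩ := hznot
          have step1 : (F.sup id) x z :=
            helper x z (I.symm hz) (fun hh => hz1 hh.symm) hz2
          have step2 : (F.sup id) z x.neg := by
            apply helper z x.neg (I.trans hz hxy) hz2
            intro hh
            apply hz1
            have := congrArg PM.neg hh
            rw [PM.neg_neg, PM.neg_neg] at this
            exact this.symm
          exact (F.sup id).trans step1 step2
        · exact helper x y hxy hne hnn
    · apply Finset.sup_le
      intro e he
      rw [hF, hfin.mem_toFinset] at he
      exact he.2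
  rw [hclaim]
  apply sup_mem_closure
  intro e he
  rw [hF, hfin.mem_toFinset] at he
  exact Submonoid.subset_closure he.1

end Aux4

section Aux5

variable {n : ℕ}

/-- Canonical index set for `Enx`. -/
def PairSet (n : ℕ) : Set (PM n × PM n) := {p | |p.1.1| < p.2.1}

theorem pairSet_facts {p : PM n × PM n} (hp : p ∈ PairSet n) :
    p.1 < p.2 ∧ p.2 ≠ p.1.neg ∧ p.1 ≠ p.2 := by
  have habs := abs_lt.mp (show |p.1.1| < p.2.1 from hp)
  have h0 := p.1.2.1
  refine ⟨?_, ?_, ?_⟩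
  · rw [← Subtype.coe_lt_coe]
    have : p.1.1 ≤ |p.1.1| := le_abs_self _
    omega
  · intro hh
    have : p.2.1 = -p.1.1 := congrArg Subtype.val hh
    omega
  · intro hh
    have : p.1.1 = p.2.1 := congrArg Subtype.val hh
    have : p.1.1 ≤ |p.1.1| := le_abs_self _
    omega

theorem Enx_eq_image (n : ℕ) :
    Enx n = (fun p : PM n × PM n => eps p.1 p.2) '' PairSet n := by
  ext e
  constructor
  · rintro ⟨i, j, hlt, hne, rfl⟩
    have hlt' : i.1 < j.1 := Subtype.coe_lt_coe.mpr hlt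
    by_cases hc : i.neg < j
    · have hc' : -i.1 < j.1 := Subtype.coe_lt_coe.mpr hc
      exact ⟨(i, j), abs_lt.mpr ⟨by omega, hlt'⟩, rfl⟩
    · have hc2 : j < i.neg := lt_of_le_of_ne (not_lt.mp hc) hne
      have hc2' : j.1 < -i.1 := Subtype.coe_lt_coe.mpr hc2
      refine ⟨(j.neg, i.neg), ?_, eps_symm_eq i j⟩
      show |(-j.1 : ℤ)| < -i.1
      rw [abs_neg, abs_lt]
      omega
  · rintro ⟨⟨i, j⟩, hp, rfl⟩
    obtain ⟨h1, h2, _⟩ := pairSet_facts hp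
    exact ⟨i, j, h1, h2, rfl⟩

theorem eps_injOn (n : ℕ) :
    Set.InjOn (fun p : PM n × PM n => eps p.1 p.2) (PairSet n) := by
  rintro ⟨i, j⟩ hp ⟨i', j'⟩ hq heq
  obtain ⟨_, hne, hij⟩ := pairSet_facts hp
  obtain ⟨_, hne', hij'⟩ := pairSet_facts hq
  simp only at heq
  have habs := abs_lt.mp (show |i.1| < j.1 from hp)
  have habs' := abs_lt.mp (show |i'.1| < j'.1 from hq)
  have hi0 := i.2.1
  have hi0' := i'.2.1
  have h1 : eps i' j' i j := by rw [← heq]; exact eps_rel_left i j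
  rw [eps_rel_iff hij' hne'] at h1
  rcases h1 with hh | ⟨hi, hj⟩ | ⟨hi, hj⟩
  · exact absurd hh hij
  · rcases hi with rfl2 | rfl2 <;> rcases hj with rfl3 | rfl3
    · -- i = i', j = i'
      exfalso
      have e1 : i.1 = i'.1 := congrArg Subtype.val rfl2
      have e2 : j.1 = i'.1 := congrArg Subtype.val rfl3
      omega
    · exact Prod.ext rfl2 rfl3
    · -- i = j', j = i'
      exfalso
      have e1 : i.1 = j'.1 := congrArg Subtype.val rfl2
      have e2 : j.1 = i'.1 := congrArg Subtype.val rfl3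
      omega
    · -- i = j', j = j'
      exfalso
      have e1 : i.1 = j'.1 := congrArg Subtype.val rfl2
      have e2 : j.1 = j'.1 := congrArg Subtype.val rfl3
      omega
  · exfalso
    rcases hi with rfl2 | rfl2 <;> rcases hj with rfl3 | rfl3 <;>
    [skip; skip; skip; skip] <;>
    · first
      | (have e1 : i.1 = -j'.1 := congrArg Subtype.val rfl2
         have e2 : j.1 = -j'.1 := congrArg Subtype.val rfl3
         omega)
      | (have e1 : i.1 = -j'.1 := congrArg Subtype.val rfl2
         have e2 : j.1 = -i'.1 := congrArg Subtype.val rfl3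
         omega)
      | (have e1 : i.1 = -i'.1 := congrArg Subtype.val rfl2
         have e2 : j.1 = -j'.1 := congrArg Subtype.val rfl3
         omega)
      | (have e1 : i.1 = -i'.1 := congrArg Subtype.val rfl2
         have e2 : j.1 = -i'.1 := congrArg Subtype.val rfl3
         omega)

theorem ncard_pairSet (n : ℕ) : (PairSet n).ncard = n ^ 2 - n := by
  classical
  set f : PM n × PM n → ℤ × ℤ :=
    fun p => if 0 < p.1.1 then (p.1.1, p.2.1) else (p.2.1, -p.1.1) with hf
  have hinj : Set.InjOn f (PairSet n) := by
    rintro ⟨i, j⟩ hp ⟨i', j'⟩ hq heq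
    have habs := abs_lt.mp (show |i.1| < j.1 from hp)
    have habs' := abs_lt.mp (show |i'.1| < j'.1 from hq)
    have hi0 := i.2.1
    have hi0' := i'.2.1
    have heq' : (if 0 < i.1 then ((i.1 : ℤ), (j.1 : ℤ)) else (j.1, -i.1)) =
        (if 0 < i'.1 then ((i'.1 : ℤ), (j'.1 : ℤ)) else (j'.1, -i'.1)) := heq
    clear heq
    split_ifs at heq' with h1 h2 h2 <;>
      rw [Prod.mk.injEq] at heq' <;> obtain ⟨e1, e2⟩ := heq' 
    · exact Prod.ext (Subtype.ext e1) (Subtype.ext e2)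
    · omega
    · omega
    · exact Prod.ext (Subtype.ext (show i.1 = i'.1 by omega)) (Subtype.ext e1)
  have himg : f '' PairSet n = ↑((Finset.Ioc (0 : ℤ) (n : ℤ)).offDiag) := by
    ext ⟨a, b⟩
    simp only [Finset.coe_offDiag, Set.mem_offDiag, Finset.mem_coe, Finset.mem_Ioc]
    constructor
    · rintro ⟨⟨i, j⟩, hp, heq⟩
      have habs := abs_lt.mp (show |i.1| < j.1 from hp)
      have hi0 := i.2.1
      have hin := abs_le.mp i.2.2
      have hjn := abs_le.mp j.2.2
      have heq' : (if 0 < i.1 then ((i.1 : ℤ), (j.1 : ℤ)) else (j.1, -i.1)) = (a, b) := heq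
      clear heq
      split_ifs at heq' with h1 <;> rw [Prod.mk.injEq] at heq' <;>
        obtain ⟨e1, e2⟩ := heq' <;> refine ⟨⟨?_, ?_⟩, ⟨?_, ?_⟩, ?_⟩ <;> omega
    · rintro ⟨⟨ha1, ha2⟩, ⟨hb1, hb2⟩, hab⟩
      rcases lt_or_gt_of_ne hab with hlt | hgt
      · refine ⟨(⟨a, by omega, abs_le.mpr ⟨by omega, ha2⟩⟩, ⟨b, by omega, abs_le.mpr ⟨by omega, hb2⟩⟩), ?_, ?_⟩
        · show |a| < b
          rw [abs_lt]; omega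
        · rw [hf]
          simp only [if_pos ha1]
      · refine ⟨(⟨-b, by omega, abs_le.mpr ⟨by omega, by omega⟩⟩, ⟨a, by omega, abs_le.mpr ⟨by omega, ha2⟩⟩), ?_, ?_⟩
        · show |(-b : ℤ)| < a
          rw [abs_neg, abs_lt]; omega
        · rw [hf]
          simp only
          rw [if_neg (by omega)]
          simp
  have := Set.ncard_image_of_injOn hinj
  rw [himg, Set.ncard_coe_finset, Finset.offDiag_card, Int.card_Ioc] at this
  rw [← this]
  simp only [sub_zero, Int.toNat_natCast]
  rw [pow_two]

end Aux5

/-- The set `RSPₙ` of restricted signed partitions of `[±n]` is a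
submonoid of `SPₙ` (it contains `⊥` and is closed under joins), it is generated as a
monoid by `Eₙ^× = {ε_{i,j} : i < j, j ≠ -i}`, and `|Eₙ^×| = n² - n`. -/
theorem RSPn_submonoid_generated_by_Enx (n : ℕ) (hn : 2 ≤ n) :
    IsRestricted (⊥ : Setoid (PM n)) ∧
    (∀ I J : Setoid (PM n), IsRestricted I → IsRestricted J → IsRestricted (I ⊔ J)) ∧
    (Submonoid.closure (Enx n) : Set (Setoid (PM n))) = {I | IsRestricted I} ∧
    (Enx n).ncard = n ^ 2 - n := by
  refine ⟨isRestricted_bot, fun I J hI hJ => isRestricted_sup hI hJ, ?_, ?_⟩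
  · apply Set.Subset.antisymm
    · let R : Submonoid (Setoid (PM n)) :=
        { carrier := {I | IsRestricted I}
          one_mem' := isRestricted_bot
          mul_mem' := fun {a b} ha hb => isRestricted_sup ha hb }
      have hle : Submonoid.closure (Enx n) ≤ R := by
        apply Submonoid.closure_le.mpr
        rintro e ⟨i, j, hlt, hne, rfl⟩
        exact isRestricted_eps (ne_of_lt hlt) hne
      exact fun I hI => hle hI
    · exact fun I hI => mem_closure_of_isRestricted hI
  · rw [Enx_eq_image, Set.ncard_image_of_injOn (eps_injOn n), ncard_pairSet]
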